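/- Under Condorcet's model with m ≥ 2 alternatives and n i.i.d. samples, for any alternative a, any h₁ ∈ ℬ(𝒜)∖R_{a≻others}, and any 0<α<1, let B = {b ∈ 𝒜 : b ≻_{h₁} a} be the set of alternatives preferred to a in h₁. Then there exist K ∈ ℝ and Γ ∈ [0,1] such that the test g defined on profiles P ∈ ℬ(𝒜)^n by g(P)=1 if w_P(B≻a)>K, g(P)=0 if w_P(B≻a)<K, and g(P)=Γ if w_P(B≻a)=K, has Size(g)=α over H₀ = R_{a≻others}, and g is a level-α most powerful test for H₀ = R_{a≻others} vs the simple alternative h₁. -/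

import Mathlib

namespace Voting

open Finset

section Generic

variable {S Θ : Type*} [Fintype S] [Fintype Θ]

/-- `Size π f θ` : the probability that test `f` rejects when the ground truth is `θ`. -/
noncomputable def Size (π : Θ → S → ℝ) (f : S → ℝ) (θ : Θ) : ℝ :=
  ∑ P, π θ P * f P

/-- `Power π f θ` : the power of test `f` at parameter `θ`. -/
noncomputable def Power (π : Θ → S → ℝ) (f : S → ℝ) (θ : Θ) : ℝ :=
  ∑ P, π θ P * f P

/-- A (randomized) test is a critical function with values in `[0,1]`. -/
def IsTest (f : S → ℝ) : Prop := ∀ P, 0 ≤ f P ∧ f P ≤ 1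

/-- `Size(f) ≤ α` over the null hypothesis `H0`. -/
def SizeLe (π : Θ → S → ℝ) (H0 : Set Θ) (f : S → ℝ) (α : ℝ) : Prop :=
  ∀ h0 ∈ H0, Size π f h0 ≤ α

/-- `Size(f) = α` over the null hypothesis `H0` (the max over `H0` equals `α`). -/
def SizeEq (π : Θ → S → ℝ) (H0 : Set Θ) (f : S → ℝ) (α : ℝ) : Prop :=
  SizeLe π H0 f α ∧ ∃ h0 ∈ H0, Size π f h0 = α

/-- `f` is a level-`α` most powerful test for `H0` vs the simple alternative `h1`. -/
def IsMostPowerful (π : Θ → S → ℝ) (H0 : Set Θ) (h1 : Θ) (α : ℝ) (f : S → ℝ) : Prop :=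
  IsTest f ∧ SizeLe π H0 f α ∧
    ∀ g : S → ℝ, IsTest g → SizeLe π H0 g α → Power π g h1 ≤ Power π f h1

/-- `f` is a level-`α` uniformly most powerful test for `H0` vs `H1`. -/
def IsUMP (π : Θ → S → ℝ) (H0 H1 : Set Θ) (α : ℝ) (f : S → ℝ) : Prop :=
  ∀ h1 ∈ H1, IsMostPowerful π H0 h1 α f

end Generic

/-- An irreflexive, antisymmetric, total binary relation on `Fin m`. -/
abbrev IsTournament {m : ℕ} (R : Fin m → Fin m → Bool) : Prop :=
  ∀ a b : Fin m, (a = b → R a b = false) ∧ (a ≠ b → R a b = !R b a)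

/-- `ℬ(𝒜)` : the set of irreflexive, antisymmetric, total binary relations on `Fin m`;
`R.1 a b = true` means `a ≻_R b`. -/
abbrev Tournament (m : ℕ) := {R : Fin m → Fin m → Bool // IsTournament R}

/-- Kendall-tau distance on binary relations. -/
def KTt {m : ℕ} (V W : Tournament m) : ℕ :=
  (Finset.univ.filter
    (fun p : Fin m × Fin m => V.1 p.1 p.2 = true ∧ W.1 p.2 p.1 = true)).card

/-- Condorcet single-sample probability of `V` given ground truth `W` and dispersion `φ`. -/
noncomputable def condorcet1 {m : ℕ} (φ : ℝ) (W V : Tournament m) : ℝ :=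
  φ ^ KTt V W / ∑ U : Tournament m, φ ^ KTt U W

/-- Condorcet's model with `n` i.i.d. samples. -/
noncomputable def condorcet {m : ℕ} (φ : ℝ) (n : ℕ) :
    Tournament m → (Fin n → Tournament m) → ℝ :=
  fun W P => ∏ i, condorcet1 φ W (P i)

/-- `R_{a≻others}` : binary relations in which `a` is preferred to all other alternatives. -/
def Rtop {m : ℕ} (a : Fin m) : Set (Tournament m) :=
  {V | ∀ b, b ≠ a → V.1 a b = true}

/-- `w_P(b≻a)` for a profile of binary relations. -/
def wpairT {m n : ℕ} (P : Fin n → Tournament m) (b a : Fin m) : ℤ :=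
  ((Finset.univ.filter (fun i => (P i).1 b a = true)).card : ℤ) -
    ((Finset.univ.filter (fun i => (P i).1 a b = true)).card : ℤ)

/-- `w_P(B≻a) = Σ_{b∈B} w_P(b≻a)`. -/
def wsetT {m n : ℕ} (P : Fin n → Tournament m) (B : Finset (Fin m)) (a : Fin m) : ℤ :=
  ∑ b ∈ B, wpairT P b a

/-- The threshold test on the statistic `w_P(B≻a)` for Condorcet's model. -/
noncomputable def wTestT {m : ℕ} (n : ℕ) (B : Finset (Fin m)) (a : Fin m) (K Γ : ℝ) :
    (Fin n → Tournament m) → ℝ :=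
  fun P =>
    if K < ((wsetT P B a : ℤ) : ℝ) then 1
    else if ((wsetT P B a : ℤ) : ℝ) < K then 0
    else Γ


section AuxNP

variable {m : ℕ}

lemma tourn_irrefl (V : Tournament m) (x : Fin m) : V.1 x x = false := (V.2 x x).1 rfl

lemma tourn_ne (V : Tournament m) {x y : Fin m} (h : x ≠ y) : V.1 x y = !V.1 y x :=
  (V.2 x y).2 h

instance : Nonempty (Tournament m) := by
  refine ⟨⟨fun x y => decide (x < y), fun a b => ⟨?_, ?_⟩⟩⟩
  · rintro rfl; simp
  · intro h
    rcases lt_or_gt_of_ne h with h' | h'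
    · simp [h', not_lt_of_gt h']
    · simp [h', not_lt_of_gt h']

lemma cond_symm (W W' : Tournament m) (x y : Fin m) :
    (W.1 x y = W'.1 x y) ↔ (W.1 y x = W'.1 y x) := by
  rcases eq_or_ne x y with rfl | h
  · rfl
  · rw [tourn_ne W h, tourn_ne W' h]; simp

/-- Flip `V` on every pair where `W` and `W'` differ. -/
def flipT (W W' V : Tournament m) : Tournament m :=
  ⟨fun x y => if W.1 x y = W'.1 x y then V.1 x y else V.1 y x, by
    intro x y
    constructor
    · rintro rfl; simp [tourn_irrefl]
    · intro h
      by_cases hc : W.1 x y = W'.1 x y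
      · have hc' : W.1 y x = W'.1 y x := (cond_symm W W' x y).1 hc
        simp [hc, hc', tourn_ne V h]
      · have hc' : ¬ W.1 y x = W'.1 y x := fun hh => hc ((cond_symm W W' y x).1 hh)
        simp [hc, hc', tourn_ne V h.symm]⟩

lemma flipT_apply (W W' V : Tournament m) (x y : Fin m) :
    (flipT W W' V).1 x y = if W.1 x y = W'.1 x y then V.1 x y else V.1 y x := rfl

lemma flipT_flipT (W W' V : Tournament m) : flipT W W' (flipT W W' V) = V := by
  apply Subtype.ext; funext x y
  rw [flipT_apply, flipT_apply, flipT_apply]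
  by_cases hc : W.1 x y = W'.1 x y
  · simp [hc]
  · have hc' : ¬ W.1 y x = W'.1 y x := fun hh => hc ((cond_symm W W' y x).1 hh)
    simp [hc, hc']

/-- The flip map as an equivalence. -/
def flipE (W W' : Tournament m) : Tournament m ≃ Tournament m where
  toFun := flipT W W'
  invFun := flipT W W'
  left_inv := flipT_flipT W W'
  right_inv := flipT_flipT W W'

lemma KTt_flipT (W W' V : Tournament m) : KTt (flipT W W' V) W = KTt V W' := by
  unfold KTt
  refine Finset.card_nbij'
    (fun p => if W.1 p.1 p.2 = W'.1 p.1 p.2 then p else (p.2, p.1))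
    (fun p => if W.1 p.1 p.2 = W'.1 p.1 p.2 then p else (p.2, p.1)) ?_ ?_ ?_ ?_
  · rintro ⟨x, y⟩ hp
    simp only [Finset.mem_coe, Finset.mem_filter, Finset.mem_univ, true_and] at hp ⊢
    simp only [flipT_apply] at hp ⊢
    obtain ⟨h1, h2⟩ := hp
    by_cases hc : W.1 x y = W'.1 x y
    · have hc' : W.1 y x = W'.1 y x := (cond_symm W W' x y).1 hc
      rw [if_pos hc] at h1 ⊢
      exact ⟨h1, hc' ▸ h2⟩
    · have hxy : x ≠ y := by
        rintro rfl; exact hc (by rw [tourn_irrefl, tourn_irrefl])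
      have hc' : ¬ W.1 y x = W'.1 y x := fun hh => hc ((cond_symm W W' y x).1 hh)
      rw [if_neg hc] at h1 ⊢
      refine ⟨h1, ?_⟩
      -- goal : W'.1 x y = true, knowing W.1 y x = true, W.1 y x ≠ W'.1 y x
      have h3 : W'.1 y x = false := by
        cases hww' : W'.1 y x
        · rfl
        · exact absurd (h2.trans hww'.symm) hc'
      rw [tourn_ne W' hxy]
      rw [h3]; rfl
  · rintro ⟨x, y⟩ hp
    simp only [Finset.mem_coe, Finset.mem_filter, Finset.mem_univ, true_and] at hp ⊢
    simp only [flipT_apply] at hp ⊢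
    obtain ⟨h1, h2⟩ := hp
    by_cases hc : W.1 x y = W'.1 x y
    · have hc' : W.1 y x = W'.1 y x := (cond_symm W W' x y).1 hc
      rw [if_pos hc]
      rw [if_pos hc]
      exact ⟨h1, hc' ▸ h2⟩
    · have hxy : x ≠ y := by
        rintro rfl; exact hc (by rw [tourn_irrefl, tourn_irrefl])
      have hc' : ¬ W.1 y x = W'.1 y x := fun hh => hc ((cond_symm W W' y x).1 hh)
      rw [if_neg hc]
      rw [if_neg hc']
      refine ⟨h1, ?_⟩
      -- goal : W.1 x y = true, knowing W'.1 y x = true, W.1 x y ≠ W'.1 x y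
      have h3 : W'.1 x y = false := by
        rw [tourn_ne W' hxy, h2]; rfl
      cases hww : W.1 x y
      · exact absurd (hww.trans h3.symm) hc
      · rfl
  · rintro ⟨x, y⟩ hp
    by_cases hc : W.1 x y = W'.1 x y
    · simp [hc]
    · have hc' : ¬ W.1 y x = W'.1 y x := fun hh => hc ((cond_symm W W' y x).1 hh)
      simp [hc, hc']
  · rintro ⟨x, y⟩ hp
    by_cases hc : W.1 x y = W'.1 x y
    · simp [hc]
    · have hc' : ¬ W.1 y x = W'.1 y x := fun hh => hc ((cond_symm W W' y x).1 hh)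
      simp [hc, hc']

lemma Zconst (φ : ℝ) (W W' : Tournament m) :
    ∑ U : Tournament m, φ ^ KTt U W = ∑ U : Tournament m, φ ^ KTt U W' := by
  refine Fintype.sum_equiv (flipE W' W) _ _ fun V => ?_
  show φ ^ KTt V W = φ ^ KTt (flipT W' W V) W'
  rw [KTt_flipT W' W V]

end AuxNP

section AuxNP2

variable {m : ℕ}

lemma Zpos {φ : ℝ} (hφ : 0 < φ) (W : Tournament m) :
    0 < ∑ U : Tournament m, φ ^ KTt U W :=
  Finset.sum_pos (fun U _ => pow_pos hφ _) Finset.univ_nonempty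

lemma condorcet1_pos {φ : ℝ} (hφ : 0 < φ) (W V : Tournament m) : 0 < condorcet1 φ W V :=
  div_pos (pow_pos hφ _) (Zpos hφ W)

lemma condorcet_pos {φ : ℝ} (hφ : 0 < φ) {n : ℕ} (W : Tournament m)
    (P : Fin n → Tournament m) : 0 < condorcet φ n W P :=
  Finset.prod_pos fun i _ => condorcet1_pos hφ W (P i)

lemma sum_condorcet1 {φ : ℝ} (hφ : 0 < φ) (W : Tournament m) :
    ∑ V : Tournament m, condorcet1 φ W V = 1 := by
  unfold condorcet1
  rw [← Finset.sum_div, div_self (Zpos hφ W).ne']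

lemma sum_condorcet {φ : ℝ} (hφ : 0 < φ) (n : ℕ) (W : Tournament m) :
    ∑ P : Fin n → Tournament m, condorcet φ n W P = 1 := by
  unfold condorcet
  rw [← Fintype.piFinset_univ, ← Finset.prod_univ_sum]
  simp [sum_condorcet1 hφ W]

/-- The tournament obtained from `h₁` by moving `a` to the top. -/
def hstar (a : Fin m) (h₁ : Tournament m) : Tournament m :=
  ⟨fun x y => if x = a then decide (y ≠ a) else if y = a then false else h₁.1 x y, by
    intro x y
    constructor
    · rintro rfl
      by_cases hx : x = a <;> simp [hx, tourn_irrefl]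
    · intro hxy
      by_cases hx : x = a <;> by_cases hy : y = a
      · exact absurd (hx.trans hy.symm) hxy
      · simp [hx, hy]
      · simp [hx, hy]
      · simp [hx, hy, tourn_ne h₁ hxy]⟩

lemma hstar_mem (a : Fin m) (h₁ : Tournament m) : hstar a h₁ ∈ Rtop a := by
  intro b hb
  simp [hstar, hb]

lemma KTt_eq_sum (V W : Tournament m) :
    (KTt V W : ℤ) = ∑ p : Fin m × Fin m,
      (if V.1 p.1 p.2 = true ∧ W.1 p.2 p.1 = true then (1 : ℤ) else 0) := by
  unfold KTt
  rw [Finset.card_filter]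
  push_cast
  rfl

lemma KTt_hstar_diff (a : Fin m) (h₁ : Tournament m) (V : Tournament m) :
    (KTt V h₁ : ℤ) - (KTt V (hstar a h₁) : ℤ)
      = ∑ b ∈ Finset.univ.filter (fun b => h₁.1 b a = true),
          ((if V.1 a b = true then (1 : ℤ) else 0) - (if V.1 b a = true then (1 : ℤ) else 0)) := by
  classical
  set B : Finset (Fin m) := Finset.univ.filter (fun b => h₁.1 b a = true) with hBdef
  have haB : a ∉ B := by
    simp [hBdef, tourn_irrefl]
  rw [KTt_eq_sum, KTt_eq_sum, ← Finset.sum_sub_distrib]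
  set d : Fin m × Fin m → ℤ := fun p =>
    (if V.1 p.1 p.2 = true ∧ h₁.1 p.2 p.1 = true then (1 : ℤ) else 0) -
    (if V.1 p.1 p.2 = true ∧ (hstar a h₁).1 p.2 p.1 = true then (1 : ℤ) else 0) with hd
  set T : Finset (Fin m × Fin m) := B ×ˢ {a} ∪ {a} ×ˢ B with hT
  have hvanish : ∀ p ∈ Finset.univ, p ∉ T → d p = 0 := by
    rintro ⟨x, y⟩ _ hp
    simp only [hT, Finset.mem_union, Finset.mem_product, Finset.mem_singleton, hBdef,
      Finset.mem_filter, Finset.mem_univ, true_and, not_or, not_and] at hp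
    obtain ⟨hp1, hp2⟩ := hp
    have heq : (hstar a h₁).1 y x = h₁.1 y x := by
      by_cases hy : y = a
      · by_cases hx : x = a
        · rw [hy, hx]; simp [hstar, tourn_irrefl]
        · have hxB : h₁.1 x a = false := by
            cases hb : h₁.1 x a
            · rfl
            · exact absurd hy (hp1 (hy ▸ hb))
          have hax : h₁.1 a x = true := by
            rw [tourn_ne h₁ (Ne.symm hx), hxB]; rfl
          rw [hy]; simp [hstar, hx, hax]
      · by_cases hx : x = a
        · have hyB : h₁.1 y a = false := by
            cases hb : h₁.1 y a
            · rfl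
            · exact absurd hb (hp2 hx)
          rw [hx]; simp [hstar, hy, hyB]
        · simp [hstar, hy, hx]
    simp only [hd]
    rw [heq, sub_self]
  rw [← Finset.sum_subset (Finset.subset_univ T) (fun p hp hnp => hvanish p hp hnp)]
  have hdisj : Disjoint (B ×ˢ ({a} : Finset (Fin m))) (({a} : Finset (Fin m)) ×ˢ B) := by
    rw [Finset.disjoint_left]
    rintro ⟨x, y⟩ hx hy
    simp only [Finset.mem_product, Finset.mem_singleton] at hx hy
    exact haB (hy.1 ▸ hx.1)
  rw [hT, Finset.sum_union hdisj, Finset.sum_product, Finset.sum_product]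
  simp only [Finset.sum_singleton]
  rw [← Finset.sum_add_distrib]
  refine Finset.sum_congr rfl fun b hb => ?_
  have hbB : h₁.1 b a = true := by
    simpa [hBdef] using hb
  have hba : b ≠ a := by
    rintro rfl; rw [tourn_irrefl] at hbB; exact Bool.false_ne_true hbB
  have h1ab : h₁.1 a b = false := by
    rw [tourn_ne h₁ (Ne.symm hba), hbB]; rfl
  have hsab : (hstar a h₁).1 a b = true := by
    simp [hstar, hba]
  have hsba : (hstar a h₁).1 b a = false := by
    simp [hstar, hba]
  simp only [hd, h1ab, hsab, hsba, hbB]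
  simp only [Bool.false_eq_true, and_false, and_true, if_false]
  ring

end AuxNP2

section AuxNP3

variable {m : ℕ}

lemma condorcet_ratio {φ : ℝ} (hφ : 0 < φ) (n : ℕ) (a : Fin m) (h₁ : Tournament m)
    (P : Fin n → Tournament m) :
    condorcet φ n h₁ P
      = φ ^ (-(wsetT P (Finset.univ.filter fun b => h₁.1 b a = true) a))
          * condorcet φ n (hstar a h₁) P := by
  classical
  set B : Finset (Fin m) := Finset.univ.filter fun b => h₁.1 b a = true with hBdef
  set W₀ := hstar a h₁ with hW₀
  set A : ℕ := ∑ i, KTt (P i) h₁ with hA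
  set C : ℕ := ∑ i, KTt (P i) W₀ with hC
  have hAC : (A : ℤ) = (C : ℤ) + (- wsetT P B a) := by
    have h1 : (A : ℤ) - (C : ℤ) = ∑ i, ((KTt (P i) h₁ : ℤ) - (KTt (P i) W₀ : ℤ)) := by
      rw [Finset.sum_sub_distrib, hA, hC]
      push_cast
      rfl
    have h2 : ∀ i, (KTt (P i) h₁ : ℤ) - (KTt (P i) W₀ : ℤ)
        = ∑ b ∈ B, ((if (P i).1 a b = true then (1 : ℤ) else 0)
            - (if (P i).1 b a = true then (1 : ℤ) else 0)) := fun i =>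
      KTt_hstar_diff a h₁ (P i)
    have h3 : (A : ℤ) - (C : ℤ) = - wsetT P B a := by
      rw [h1, Finset.sum_congr rfl fun i _ => h2 i, Finset.sum_comm]
      unfold wsetT wpairT
      rw [← Finset.sum_neg_distrib]
      refine Finset.sum_congr rfl fun b _ => ?_
      rw [Finset.sum_sub_distrib, Finset.sum_boole, Finset.sum_boole]
      push_cast
      ring
    linarith
  have hZ : (∑ U : Tournament m, φ ^ KTt U h₁) = ∑ U : Tournament m, φ ^ KTt U W₀ :=
    Zconst φ h₁ W₀
  unfold condorcet condorcet1
  rw [Finset.prod_div_distrib, Finset.prod_div_distrib, Finset.prod_pow_eq_pow_sum,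
    Finset.prod_pow_eq_pow_sum, ← hA, ← hC, hZ]
  rw [mul_comm (φ ^ (-(wsetT P B a))), div_mul_eq_mul_div]
  congr 1
  have : (φ : ℝ) ^ (A : ℤ) = φ ^ ((C : ℤ) + (- wsetT P B a)) := by rw [← hAC]
  rw [zpow_add₀ hφ.ne', zpow_natCast, zpow_natCast] at this
  simpa using this

lemma wTestT_congr {n : ℕ} (B : Finset (Fin m)) (a : Fin m) (K Γ : ℝ)
    {P P' : Fin n → Tournament m} (h : wsetT P B a = wsetT P' B a) :
    wTestT n B a K Γ P = wTestT n B a K Γ P' := by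
  unfold wTestT
  rw [h]

lemma wsetT_flip {W W' : Tournament m} {a : Fin m} (hW : ∀ x, W.1 x a = W'.1 x a)
    {n : ℕ} (P : Fin n → Tournament m) (B : Finset (Fin m)) :
    wsetT (fun i => flipT W W' (P i)) B a = wsetT P B a := by
  unfold wsetT wpairT
  refine Finset.sum_congr rfl fun b _ => ?_
  have h1 : ∀ V : Tournament m, (flipT W W' V).1 b a = V.1 b a := by
    intro V
    rw [flipT_apply, if_pos (hW b)]
  have h2 : ∀ V : Tournament m, (flipT W W' V).1 a b = V.1 a b := by
    intro V
    rw [flipT_apply, if_pos ((cond_symm W W' b a).1 (hW b))]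
  simp only [h1, h2]

lemma rtop_agree {W W' : Tournament m} {a : Fin m} (hW : W ∈ Rtop a) (hW' : W' ∈ Rtop a) :
    ∀ x, W.1 x a = W'.1 x a := by
  intro x
  rcases eq_or_ne x a with rfl | hx
  · rw [tourn_irrefl, tourn_irrefl]
  · rw [tourn_ne W hx, tourn_ne W' hx, hW x hx, hW' x hx]

lemma size_const {φ : ℝ} (hφ : 0 < φ) (n : ℕ) (a : Fin m) (B : Finset (Fin m)) (K Γ : ℝ)
    {W W' : Tournament m} (hW : W ∈ Rtop a) (hW' : W' ∈ Rtop a) :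
    Size (condorcet φ n) (wTestT n B a K Γ) W = Size (condorcet φ n) (wTestT n B a K Γ) W' := by
  unfold Size
  refine Fintype.sum_equiv (Equiv.piCongrRight fun _ : Fin n => flipE W' W) _ _ fun P => ?_
  have hagree : ∀ x, W'.1 x a = W.1 x a := rtop_agree hW' hW
  have heP : ((Equiv.piCongrRight fun _ : Fin n => flipE W' W) P) = fun i => flipT W' W (P i) :=
    rfl
  rw [heP]
  have h1 : condorcet φ n W P = condorcet φ n W' (fun i => flipT W' W (P i)) := by
    unfold condorcet condorcet1
    rw [Zconst φ W W']
    refine Finset.prod_congr rfl fun i _ => ?_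
    rw [KTt_flipT W' W (P i)]
  have h2 : wTestT n B a K Γ (fun i => flipT W' W (P i)) = wTestT n B a K Γ P :=
    wTestT_congr B a K Γ (wsetT_flip hagree P B)
  rw [h1, h2]

end AuxNP3
/-- **A most powerful non-winner test for Condorcet.** For any `a`, any
`h₁ ∈ ℬ(𝒜)∖R_{a≻others}`, and any `0<α<1`, with `B = {b : b ≻_{h₁} a}`, there exist `K`
and `Γ ∈ [0,1]` such that the threshold test on `w_P(B≻a)` has size exactly `α` over
`H₀ = R_{a≻others}` and is a level-`α` most powerful test for `H₀` vs `h₁`. -/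

theorem stmt10 (m n : ℕ) (hm : 2 ≤ m) (φ : ℝ) (hφ0 : 0 < φ) (hφ1 : φ < 1)
    (α : ℝ) (hα0 : 0 < α) (hα1 : α < 1)
    (a : Fin m) (h₁ : Tournament m) (hh₁ : h₁ ∉ Rtop a) :
    ∃ K Γ : ℝ, 0 ≤ Γ ∧ Γ ≤ 1 ∧
      SizeEq (condorcet φ n) (Rtop a)
        (wTestT n (Finset.univ.filter (fun b => h₁.1 b a = true)) a K Γ) α ∧
      IsMostPowerful (condorcet φ n) (Rtop a) h₁ α
        (wTestT n (Finset.univ.filter (fun b => h₁.1 b a = true)) a K Γ) := by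
  classical
  set B : Finset (Fin m) := Finset.univ.filter (fun b => h₁.1 b a = true) with hBdef
  set W₀ : Tournament m := hstar a h₁ with hW₀def
  have hW₀ : W₀ ∈ Rtop a := hstar_mem a h₁
  set w : (Fin n → Tournament m) → ℤ := fun P => wsetT P B a with hwdef
  set π₀ : (Fin n → Tournament m) → ℝ := condorcet φ n W₀ with hπ₀
  set tail : ℤ → ℝ := fun v => ∑ P ∈ Finset.univ.filter (fun P => v ≤ w P), π₀ P with htail
  set vals : Finset ℤ := Finset.image w Finset.univ with hvals
  have hvals_ne : vals.Nonempty :=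
    ⟨w (Classical.arbitrary _), Finset.mem_image_of_mem _ (Finset.mem_univ _)⟩
  have htail_min : tail (vals.min' hvals_ne) = 1 := by
    have hfe : Finset.univ.filter (fun P => vals.min' hvals_ne ≤ w P) = Finset.univ := by
      refine Finset.filter_true_of_mem fun P _ => ?_
      exact vals.min'_le _ (Finset.mem_image_of_mem _ (Finset.mem_univ _))
    show (∑ P ∈ Finset.univ.filter (fun P => vals.min' hvals_ne ≤ w P), π₀ P) = 1
    rw [hfe, hπ₀]
    exact sum_condorcet hφ0 n W₀
  set C : Finset ℤ := vals.filter (fun v => α ≤ tail v) with hC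
  have hC_ne : C.Nonempty :=
    ⟨vals.min' hvals_ne, Finset.mem_filter.2 ⟨vals.min'_mem _, by rw [htail_min]; exact hα1.le⟩⟩
  set K₀ : ℤ := C.max' hC_ne with hK₀
  have hK₀C : K₀ ∈ C := C.max'_mem hC_ne
  have hK₀vals : K₀ ∈ vals := (Finset.mem_filter.1 hK₀C).1
  have htailK : α ≤ tail K₀ := (Finset.mem_filter.1 hK₀C).2
  set strict : ℝ := ∑ P ∈ Finset.univ.filter (fun P => K₀ < w P), π₀ P with hstrictdef
  set mass : ℝ := ∑ P ∈ Finset.univ.filter (fun P => w P = K₀), π₀ P with hmassdef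
  have hmass_pos : 0 < mass := by
    obtain ⟨P₀, -, hP₀⟩ := Finset.mem_image.1 hK₀vals
    exact Finset.sum_pos (fun P _ => condorcet_pos hφ0 W₀ P)
      ⟨P₀, Finset.mem_filter.2 ⟨Finset.mem_univ _, hP₀⟩⟩
  have hsplit : tail K₀ = strict + mass := by
    have h1 : (Finset.univ.filter (fun P => K₀ ≤ w P)).filter (fun P => K₀ < w P)
        = Finset.univ.filter (fun P => K₀ < w P) := by
      ext P; simp only [Finset.mem_filter, Finset.mem_univ, true_and]; omega
    have h2 : (Finset.univ.filter (fun P => K₀ ≤ w P)).filter (fun P => ¬ K₀ < w P)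
        = Finset.univ.filter (fun P => w P = K₀) := by
      ext P; simp only [Finset.mem_filter, Finset.mem_univ, true_and]; omega
    calc tail K₀ = ∑ P ∈ Finset.univ.filter (fun P => K₀ ≤ w P), π₀ P := rfl
    _ = strict + mass := by
        rw [← Finset.sum_filter_add_sum_filter_not
          (Finset.univ.filter (fun P => K₀ ≤ w P)) (fun P => K₀ < w P) π₀, h1, h2]
  have hstrict_le : strict ≤ α := by
    by_cases hne : (Finset.univ.filter (fun P => K₀ < w P)).Nonempty
    · obtain ⟨Q, hQ⟩ := hne
      have hQ' : K₀ < w Q := (Finset.mem_filter.1 hQ).2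
      set D : Finset ℤ := vals.filter (fun v => K₀ < v) with hD
      have hD_ne : D.Nonempty :=
        ⟨w Q, Finset.mem_filter.2 ⟨Finset.mem_image_of_mem _ (Finset.mem_univ _), hQ'⟩⟩
      set v₁ : ℤ := D.min' hD_ne with hv₁
      have hv₁D : v₁ ∈ D := D.min'_mem hD_ne
      have hv₁vals : v₁ ∈ vals := (Finset.mem_filter.1 hv₁D).1
      have hv₁K : K₀ < v₁ := (Finset.mem_filter.1 hv₁D).2
      have hfe : Finset.univ.filter (fun P => K₀ < w P)
          = Finset.univ.filter (fun P => v₁ ≤ w P) := by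
        ext P
        simp only [Finset.mem_filter, Finset.mem_univ, true_and]
        constructor
        · intro h
          exact D.min'_le _
            (Finset.mem_filter.2 ⟨Finset.mem_image_of_mem _ (Finset.mem_univ _), h⟩)
        · intro h; omega
      have hv₁notC : v₁ ∉ C := fun hmem => absurd (C.le_max' _ hmem) (by omega)
      have htv₁ : tail v₁ < α :=
        not_le.1 fun hcon => hv₁notC (Finset.mem_filter.2 ⟨hv₁vals, hcon⟩)
      calc strict = tail v₁ := by rw [hstrictdef, hfe]
      _ ≤ α := htv₁.le
    · rw [Finset.not_nonempty_iff_eq_empty] at hne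
      rw [hstrictdef, hne, Finset.sum_empty]
      exact hα0.le
  set Γr : ℝ := (α - strict) / mass with hΓr
  have hΓ0 : 0 ≤ Γr := div_nonneg (by linarith) hmass_pos.le
  have hΓ1 : Γr ≤ 1 := by
    rw [hΓr, div_le_one hmass_pos]
    linarith
  have hΓmass : Γr * mass = α - strict := by
    rw [hΓr]
    field_simp
  -- evaluation of the test
  have hg_gt : ∀ P, K₀ < w P → wTestT n B a ((K₀ : ℤ) : ℝ) Γr P = 1 := by
    intro P h
    have h' : ((K₀ : ℤ) : ℝ) < ((wsetT P B a : ℤ) : ℝ) := Int.cast_lt.mpr h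
    unfold wTestT
    rw [if_pos h']
  have hg_lt : ∀ P, w P < K₀ → wTestT n B a ((K₀ : ℤ) : ℝ) Γr P = 0 := by
    intro P h
    have h' : ((wsetT P B a : ℤ) : ℝ) < ((K₀ : ℤ) : ℝ) := Int.cast_lt.mpr h
    unfold wTestT
    rw [if_neg (by linarith), if_pos h']
  have hg_eq : ∀ P, w P = K₀ → wTestT n B a ((K₀ : ℤ) : ℝ) Γr P = Γr := by
    intro P h
    have h'' : wsetT P B a = K₀ := h
    have h' : ((wsetT P B a : ℤ) : ℝ) = ((K₀ : ℤ) : ℝ) := by rw [h'']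
    unfold wTestT
    rw [if_neg (by rw [h']; exact lt_irrefl _), if_neg (by rw [h']; exact lt_irrefl _)]
  have hsizeW₀ : Size (condorcet φ n) (wTestT n B a ((K₀ : ℤ) : ℝ) Γr) W₀ = strict + Γr * mass := by
    unfold Size
    rw [← Finset.sum_filter_add_sum_filter_not Finset.univ (fun P => K₀ < w P)
      (fun P => condorcet φ n W₀ P * wTestT n B a ((K₀ : ℤ) : ℝ) Γr P)]
    have e1 : ∑ P ∈ Finset.univ.filter (fun P => K₀ < w P),
        condorcet φ n W₀ P * wTestT n B a ((K₀ : ℤ) : ℝ) Γr P = strict := by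
      rw [hstrictdef]
      refine Finset.sum_congr rfl fun P hP => ?_
      rw [hg_gt P (Finset.mem_filter.1 hP).2, mul_one, hπ₀]
    have f1 : (Finset.univ.filter (fun P => ¬ K₀ < w P)).filter (fun P => w P = K₀)
        = Finset.univ.filter (fun P => w P = K₀) := by
      ext P; simp only [Finset.mem_filter, Finset.mem_univ, true_and]; omega
    have e2 : ∑ P ∈ Finset.univ.filter (fun P => ¬ K₀ < w P),
        condorcet φ n W₀ P * wTestT n B a ((K₀ : ℤ) : ℝ) Γr P = Γr * mass := by
      rw [← Finset.sum_filter_add_sum_filter_not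
        (Finset.univ.filter (fun P => ¬ K₀ < w P)) (fun P => w P = K₀), f1]
      have f2 : ∑ P ∈ Finset.univ.filter (fun P => w P = K₀),
          condorcet φ n W₀ P * wTestT n B a ((K₀ : ℤ) : ℝ) Γr P = Γr * mass := by
        rw [hmassdef, Finset.mul_sum]
        refine Finset.sum_congr rfl fun P hP => ?_
        rw [hg_eq P (Finset.mem_filter.1 hP).2, hπ₀]
        ring
      have f3 : ∑ P ∈ (Finset.univ.filter (fun P => ¬ K₀ < w P)).filter (fun P => ¬ w P = K₀),
          condorcet φ n W₀ P * wTestT n B a ((K₀ : ℤ) : ℝ) Γr P = 0 := by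
        refine Finset.sum_eq_zero fun P hP => ?_
        have h' := Finset.mem_filter.1 hP
        have h'' := (Finset.mem_filter.1 h'.1).2
        have hlt : w P < K₀ := by
          rcases h' with ⟨-, hne⟩
          omega
        rw [hg_lt P hlt, mul_zero]
      rw [f2, f3, add_zero]
    rw [e1, e2]
  have hsize_α : Size (condorcet φ n) (wTestT n B a ((K₀ : ℤ) : ℝ) Γr) W₀ = α := by
    rw [hsizeW₀, hΓmass]
    ring
  have hSizeLe : SizeLe (condorcet φ n) (Rtop a) (wTestT n B a ((K₀ : ℤ) : ℝ) Γr) α := by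
    intro h₀ hh₀
    rw [size_const hφ0 n a B ((K₀ : ℤ) : ℝ) Γr hh₀ hW₀, hsize_α]
  have hTest : IsTest (wTestT n B a ((K₀ : ℤ) : ℝ) Γr) := by
    intro P
    unfold wTestT
    split_ifs
    · exact ⟨zero_le_one, le_refl 1⟩
    · exact ⟨le_refl 0, zero_le_one⟩
    · exact ⟨hΓ0, hΓ1⟩
  refine ⟨((K₀ : ℤ) : ℝ), Γr, hΓ0, hΓ1, ⟨hSizeLe, W₀, hW₀, hsize_α⟩, hTest, hSizeLe, ?_⟩
  intro f hf hfle
  have hf0 : Size (condorcet φ n) f W₀ ≤ α := hfle W₀ hW₀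
  set k : ℝ := φ ^ (-K₀ : ℤ) with hk
  have hkpos : 0 < k := zpow_pos hφ0 _
  have key : ∀ P, 0 ≤ (wTestT n B a ((K₀ : ℤ) : ℝ) Γr P - f P)
      * (condorcet φ n h₁ P - k * condorcet φ n W₀ P) := by
    intro P
    have hratio : condorcet φ n h₁ P = φ ^ (-(w P)) * condorcet φ n W₀ P := by
      have hr := condorcet_ratio hφ0 n a h₁ P
      rw [← hBdef, ← hW₀def] at hr
      exact hr
    rcases lt_trichotomy (w P) K₀ with hlt | heq | hgt
    · have hgP : wTestT n B a ((K₀ : ℤ) : ℝ) Γr P = 0 := hg_lt P hlt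
      have hmono : φ ^ (-(w P) : ℤ) ≤ φ ^ (-K₀ : ℤ) :=
        (zpow_lt_zpow_right_of_lt_one₀ hφ0 hφ1 (by omega)).le
      have h2 : condorcet φ n h₁ P - k * condorcet φ n W₀ P ≤ 0 := by
        rw [hratio, hk, ← sub_mul]
        exact mul_nonpos_of_nonpos_of_nonneg (by linarith) (condorcet_pos hφ0 W₀ P).le
      have h1 : wTestT n B a ((K₀ : ℤ) : ℝ) Γr P - f P ≤ 0 := by
        rw [hgP]; linarith [(hf P).1]
      nlinarith [h1, h2]
    · have h2 : condorcet φ n h₁ P - k * condorcet φ n W₀ P = 0 := by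
        rw [hratio, hk, heq, sub_self]
      rw [h2, mul_zero]
    · have hgP := hg_gt P hgt
      have hmono : φ ^ (-K₀ : ℤ) ≤ φ ^ (-(w P) : ℤ) :=
        (zpow_lt_zpow_right_of_lt_one₀ hφ0 hφ1 (by omega)).le
      have h2 : 0 ≤ condorcet φ n h₁ P - k * condorcet φ n W₀ P := by
        rw [hratio, hk, ← sub_mul]
        exact mul_nonneg (by linarith) (condorcet_pos hφ0 W₀ P).le
      have h1 : 0 ≤ wTestT n B a ((K₀ : ℤ) : ℝ) Γr P - f P := by
        rw [hgP]; linarith [(hf P).2]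
      exact mul_nonneg h1 h2
  have hsum : 0 ≤ ∑ P, (wTestT n B a ((K₀ : ℤ) : ℝ) Γr P - f P)
      * (condorcet φ n h₁ P - k * condorcet φ n W₀ P) :=
    Finset.sum_nonneg fun P _ => key P
  have hexpand : ∑ P, (wTestT n B a ((K₀ : ℤ) : ℝ) Γr P - f P)
      * (condorcet φ n h₁ P - k * condorcet φ n W₀ P)
      = (Power (condorcet φ n) (wTestT n B a ((K₀ : ℤ) : ℝ) Γr) h₁
          - Power (condorcet φ n) f h₁)
        - k * (Size (condorcet φ n) (wTestT n B a ((K₀ : ℤ) : ℝ) Γr) W₀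
          - Size (condorcet φ n) f W₀) := by
    unfold Power Size
    rw [mul_sub, Finset.mul_sum, Finset.mul_sum, ← Finset.sum_sub_distrib,
      ← Finset.sum_sub_distrib, ← Finset.sum_sub_distrib]
    exact Finset.sum_congr rfl fun P _ => by ring
  have hks : 0 ≤ k * (Size (condorcet φ n) (wTestT n B a ((K₀ : ℤ) : ℝ) Γr) W₀
      - Size (condorcet φ n) f W₀) :=
    mul_nonneg hkpos.le (by rw [hsize_α]; linarith)
  rw [hexpand] at hsum
  linarith

end Voting
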